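/- For all subsets I, K ⊆ {1, …, n} and all monomials e^J, e^L of R, one has (−1)^{|I|} {α_I e^J, α_K e^L} = Δ(α_I e^L) · (α_K e^J) + (−1)^{|I|} (α_I e^L) · Δ(α_K e^J) in H; equivalently, Δ(α_I e^J · α_K e^L) = Δ(α_I e^J)·α_K e^L + (−1)^{|I|} α_I e^J·Δ(α_K e^L) + Δ(α_I e^L)·α_K e^J + (−1)^{|I|} α_I e^L·Δ(α_K e^J). -/

import Mathlib

open MvPolynomial Finset

noncomputable def ee (K : Type) [CommRing K] (n : ℕ) : ℕ → MvPolynomial (Fin n) K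
  | 0 => 1
  | (m + 1) => if h : m + 1 ≤ n then MvPolynomial.X ⟨m, by omega⟩ else 0

noncomputable def DD (K : Type) [CommRing K] (n : ℕ) (i : Fin n) :
    MvPolynomial (Fin n) K →ₗ[K] MvPolynomial (Fin n) K :=
  ∑ j : Fin n, if i ≤ j then
    (LinearMap.mulLeft K (ee K n (j.val - i.val))).comp (MvPolynomial.pderiv j).toLinearMap
  else 0

/-- The model of `H = Λ_ℤ(α_1,…,α_n) ⊗ ℤ[e_1,…,e_n]`: a function `a : H' n` represents
`∑_I α_I · (a I)`. -/
abbrev H' (n : ℕ) := Finset (Fin n) → MvPolynomial (Fin n) ℤ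

/-- `sgn I K` : the Koszul sign defined by `α_{I∪K} = sgn(I,K) α_I α_K` for disjoint `I, K`. -/
def sgn (n : ℕ) (I K : Finset (Fin n)) : ℤ :=
  (-1) ^ (((I ×ˢ K).filter (fun p => p.2 < p.1)).card)

/-- The basis element `α_I e^J` (more generally `α_I · p`). -/
noncomputable def bas {n : ℕ} (I : Finset (Fin n)) (p : MvPolynomial (Fin n) ℤ) : H' n :=
  fun S => if S = I then p else 0

/-- The graded-commutative product on `H`. -/
noncomputable def wmul {n : ℕ} (a b : H' n) : H' n :=
  fun S => ∑ I ∈ S.powerset, sgn n I (S \ I) * a I * b (S \ I)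

/-- The odd derivation `∂/∂α_ℓ` of `H` (ℤ-linear in `a`). -/
noncomputable def oda {n : ℕ} (l : Fin n) (a : H' n) : H' n :=
  fun S => if l ∈ S then 0
    else ((-1 : ℤ) ^ ((S.filter (fun i => i < l)).card)) • a (insert l S)

/-- The BV operator: `Δ(α_I e^J) = ∑_ℓ (∂α_I/∂α_ℓ) · D_ℓ(e^J)`, extended ℤ-linearly. -/
noncomputable def Hdel {n : ℕ} (a : H' n) : H' n :=
  fun S => ∑ l : Fin n, if l ∈ S then 0
    else ((-1 : ℤ) ^ ((S.filter (fun i => i < l)).card)) • DD ℤ n l (a (insert l S))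

/-- The BV bracket `{a,b} = (−1)^{|a|}(Δ(a·b) − Δ(a)·b) − a·Δ(b)`, defined on basis elements
and extended ℤ-bilinearly (via the canonical decomposition `a = ∑_I α_I (a I)`). -/
noncomputable def bk {n : ℕ} (a b : H' n) : H' n :=
  ∑ I : Finset (Fin n),
    (((-1 : ℤ) ^ I.card) • (Hdel (wmul (bas I (a I)) b) - wmul (Hdel (bas I (a I))) b)
      - wmul (bas I (a I)) (Hdel b))


/-! Auxiliary -/

def eps {n : ℕ} (M : Finset (Fin n)) (l : Fin n) : ℤ := (-1) ^ ((M.filter (fun i => i < l)).card)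

lemma bas_zero {n : ℕ} (I : Finset (Fin n)) : bas I (0 : MvPolynomial (Fin n) ℤ) = 0 := by
  funext S; simp [bas]

lemma bas_add {n : ℕ} (I : Finset (Fin n)) (p q : MvPolynomial (Fin n) ℤ) :
    bas I (p + q) = bas I p + bas I q := by
  funext S; by_cases h : S = I <;> simp [bas, h]

lemma bas_smul {n : ℕ} (I : Finset (Fin n)) (c : ℤ) (p : MvPolynomial (Fin n) ℤ) :
    bas I (c • p) = c • bas I p := by
  funext S; by_cases h : S = I <;> simp [bas, h]

lemma wmul_zero_left {n : ℕ} (b : H' n) : wmul 0 b = 0 := by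
  funext S; simp [wmul]

lemma wmul_zero_right {n : ℕ} (a : H' n) : wmul a 0 = 0 := by
  funext S; simp [wmul]

lemma Hdel_zero {n : ℕ} : Hdel (0 : H' n) = 0 := by
  funext S; simp [Hdel]

lemma wmul_smul_left {n : ℕ} (c : ℤ) (a b : H' n) : wmul (c • a) b = c • wmul a b := by
  funext S
  simp only [wmul, Pi.smul_apply, smul_eq_mul, zsmul_eq_mul, Finset.mul_sum]
  exact Finset.sum_congr rfl fun i _ => by ring

lemma wmul_smul_right {n : ℕ} (c : ℤ) (a b : H' n) : wmul a (c • b) = c • wmul a b := by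
  funext S
  simp only [wmul, Pi.smul_apply, smul_eq_mul, zsmul_eq_mul, Finset.mul_sum]
  exact Finset.sum_congr rfl fun i _ => by ring

lemma wmul_sum_left {n : ℕ} {ι : Type*} (s : Finset ι) (f : ι → H' n) (b : H' n) :
    wmul (∑ l ∈ s, f l) b = ∑ l ∈ s, wmul (f l) b := by
  funext S
  simp only [wmul, Finset.sum_apply, Finset.sum_mul, Finset.mul_sum]
  rw [Finset.sum_comm]

lemma wmul_sum_right {n : ℕ} {ι : Type*} (s : Finset ι) (f : ι → H' n) (a : H' n) :
    wmul a (∑ l ∈ s, f l) = ∑ l ∈ s, wmul a (f l) := by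
  funext S
  simp only [wmul, Finset.sum_apply, Finset.sum_mul, Finset.mul_sum]
  rw [Finset.sum_comm]

lemma filter_erase_lt {n : ℕ} (M : Finset (Fin n)) (l : Fin n) :
    (M.erase l).filter (fun i => i < l) = M.filter (fun i => i < l) := by
  rw [Finset.filter_erase, Finset.erase_eq_of_notMem]
  simp

lemma wmul_bas_disjoint {n : ℕ} {I K : Finset (Fin n)} (h : Disjoint I K)
    (p q : MvPolynomial (Fin n) ℤ) :
    wmul (bas I p) (bas K q) = bas (I ∪ K) (sgn n I K • (p * q)) := by
  funext S
  simp only [wmul, bas, mul_ite, mul_zero, ite_mul, zero_mul]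
  have key : ∀ x ∈ S.powerset,
      (if S \ x = K then if x = I then (↑(sgn n x (S \ x)) : MvPolynomial (Fin n) ℤ) * p * q else 0 else 0)
      = (if x = I then (if S \ x = K then (↑(sgn n x (S \ x)) : MvPolynomial (Fin n) ℤ) * p * q else 0) else 0) := by
    intro x _; split_ifs <;> rfl
  rw [Finset.sum_congr rfl key, Finset.sum_ite_eq' S.powerset I
    (fun I' => if S \ I' = K then (↑(sgn n I' (S \ I')) : MvPolynomial (Fin n) ℤ) * p * q else 0)]
  by_cases hS : S = I ∪ K
  · have hIS : I ∈ S.powerset := by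
      rw [Finset.mem_powerset, hS]
      exact Finset.subset_union_left
    have hSI : S \ I = K := by
      rw [hS, Finset.union_sdiff_cancel_left h]
    simp only [hIS, if_true, hSI, if_true, if_pos hS]
    rw [zsmul_eq_mul]; ring
  · rw [if_neg hS]
    by_cases hIS : I ∈ S.powerset
    · rw [if_pos hIS]
      have : ¬ (S \ I = K) := by
        intro hc
        apply hS
        rw [← hc, Finset.union_sdiff_of_subset (Finset.mem_powerset.mp hIS)]
      rw [if_neg this]
    · rw [if_neg hIS]

lemma wmul_bas_not_disjoint {n : ℕ} {I K : Finset (Fin n)} (h : ¬ Disjoint I K)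
    (p q : MvPolynomial (Fin n) ℤ) :
    wmul (bas I p) (bas K q) = 0 := by
  funext S
  simp only [wmul, bas, mul_ite, mul_zero, ite_mul, zero_mul]
  have key : ∀ x ∈ S.powerset,
      (if S \ x = K then if x = I then (↑(sgn n x (S \ x)) : MvPolynomial (Fin n) ℤ) * p * q else 0 else 0)
      = (if x = I then (if S \ x = K then (↑(sgn n x (S \ x)) : MvPolynomial (Fin n) ℤ) * p * q else 0) else 0) := by
    intro x _; split_ifs <;> rfl
  rw [Finset.sum_congr rfl key, Finset.sum_ite_eq' S.powerset I
    (fun I' => if S \ I' = K then (↑(sgn n I' (S \ I')) : MvPolynomial (Fin n) ℤ) * p * q else 0)]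
  by_cases hIS : I ∈ S.powerset
  · rw [if_pos hIS]
    have : ¬ (S \ I = K) := by
      intro hc
      exact h (hc ▸ Finset.disjoint_sdiff)
    simp [this]
  · simp [hIS]

lemma Hdel_bas {n : ℕ} (M : Finset (Fin n)) (p : MvPolynomial (Fin n) ℤ) :
    Hdel (bas M p) = ∑ l ∈ M, bas (M.erase l) (eps M l • DD ℤ n l p) := by
  funext S
  simp only [Finset.sum_apply, Hdel, bas]
  rw [← Finset.sum_filter_add_sum_filter_not Finset.univ (fun l => l ∈ M)]
  have h2 : ∑ l ∈ Finset.univ.filter (fun l => ¬ l ∈ M), (if l ∈ S then 0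
      else ((-1 : ℤ) ^ ((S.filter (fun i => i < l)).card)) •
        DD ℤ n l (if insert l S = M then p else 0)) = 0 := by
    apply Finset.sum_eq_zero
    intro l hl
    simp only [Finset.mem_filter] at hl
    have : ¬ (insert l S = M) := fun hc => hl.2 (hc ▸ Finset.mem_insert_self l S)
    simp [this]
  rw [h2, add_zero, Finset.filter_mem_eq_inter, Finset.univ_inter]
  apply Finset.sum_congr rfl
  intro l hl
  by_cases hlS : l ∈ S
  · have : ¬ (S = M.erase l) := by
      intro hc; rw [hc] at hlS; exact (Finset.notMem_erase l M) hlS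
    simp [hlS, this]
  · rw [if_neg hlS]
    by_cases hins : insert l S = M
    · have hS : S = M.erase l := by
        rw [← hins, Finset.erase_insert hlS]
      rw [if_pos hins, if_pos hS, hS]
      congr 1
      rw [eps, filter_erase_lt]
    · have : ¬ (S = M.erase l) := by
        intro hc
        apply hins
        rw [hc, Finset.insert_erase hl]
      rw [if_neg hins, if_neg this]
      simp

/-! counting -/

def cnt {n : ℕ} (A : Finset (Fin n)) (l : Fin n) : ℕ := (A.filter (fun i => i < l)).card

def dcnt {n : ℕ} (A : Finset (Fin n)) (l : Fin n) : ℕ := (A.filter (fun i => l < i)).card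

def scnt {n : ℕ} (I K : Finset (Fin n)) : ℕ := ∑ i ∈ I, cnt K i

lemma eps_eq {n : ℕ} (A : Finset (Fin n)) (l : Fin n) : eps A l = (-1 : ℤ) ^ (cnt A l) := rfl

lemma sgn_eq {n : ℕ} (I K : Finset (Fin n)) : sgn n I K = (-1 : ℤ) ^ (scnt I K) := by
  rw [sgn]
  congr 1
  rw [Finset.card_filter, Finset.sum_product]
  exact Finset.sum_congr rfl fun i _ => (Finset.card_filter _ _).symm

lemma cnt_union {n : ℕ} {I K : Finset (Fin n)} (h : Disjoint I K) (l : Fin n) :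
    cnt (I ∪ K) l = cnt I l + cnt K l := by
  rw [cnt, Finset.filter_union, Finset.card_union_of_disjoint, cnt, cnt]
  exact Finset.disjoint_filter_filter h

lemma cnt_erase {n : ℕ} (A : Finset (Fin n)) (l : Fin n) : cnt (A.erase l) l = cnt A l := by
  rw [cnt, filter_erase_lt, cnt]

lemma scnt_erase_left {n : ℕ} {I : Finset (Fin n)} {l : Fin n} (hl : l ∈ I)
    (K : Finset (Fin n)) : scnt I K = cnt K l + scnt (I.erase l) K := by
  rw [scnt, scnt, add_comm, Finset.sum_erase_add I _ hl]

lemma cnt_erase_right {n : ℕ} {K : Finset (Fin n)} {l : Fin n} (hl : l ∈ K) (i : Fin n) :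
    cnt K i = cnt (K.erase l) i + (if l < i then 1 else 0) := by
  conv_lhs => rw [cnt, ← Finset.insert_erase hl]
  rw [Finset.filter_insert]
  split_ifs with h
  · rw [Finset.card_insert_of_notMem, cnt]
    intro hc
    exact (Finset.notMem_erase l K) (Finset.mem_of_mem_filter l hc)
  · rw [cnt, add_zero]

lemma scnt_erase_right {n : ℕ} {K : Finset (Fin n)} {l : Fin n} (hl : l ∈ K)
    (I : Finset (Fin n)) : scnt I K = scnt I (K.erase l) + dcnt I l := by
  rw [scnt, scnt, dcnt, Finset.card_filter, ← Finset.sum_add_distrib]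
  exact Finset.sum_congr rfl fun i _ => cnt_erase_right hl i

lemma cnt_add_dcnt {n : ℕ} {A : Finset (Fin n)} {l : Fin n} (hl : l ∉ A) :
    cnt A l + dcnt A l = A.card := by
  rw [cnt, dcnt, ← Finset.card_union_of_disjoint, Finset.filter_union_right]
  · congr 1
    apply Finset.filter_true_of_mem
    intro x hx
    rcases lt_trichotomy x l with h | h | h
    · exact Or.inl h
    · exact absurd (h ▸ hx) hl
    · exact Or.inr h
  · rw [Finset.disjoint_left]
    intro x hx hx'
    rw [Finset.mem_filter] at hx hx'
    exact absurd hx'.2 (not_lt_of_gt hx.2)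

lemma neg_one_pow_congr' {a b : ℕ} (h : a % 2 = b % 2) : (-1 : ℤ) ^ a = (-1) ^ b := by
  conv_lhs => rw [← Nat.div_add_mod a 2]
  conv_rhs => rw [← Nat.div_add_mod b 2]
  rw [h, pow_add, pow_add, pow_mul, pow_mul, neg_one_sq, one_pow, one_pow]

lemma neg_one_pow_anticongr {a b : ℕ} (h : a % 2 ≠ b % 2) : (-1 : ℤ) ^ a + (-1) ^ b = 0 := by
  have : a % 2 = (b + 1) % 2 := by omega
  rw [neg_one_pow_congr' this, pow_succ]
  ring

lemma DD_mul {n : ℕ} (l : Fin n) (p q : MvPolynomial (Fin n) ℤ) :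
    DD ℤ n l (p * q) = DD ℤ n l p * q + p * DD ℤ n l q := by
  simp only [DD, LinearMap.sum_apply]
  rw [Finset.sum_mul, Finset.mul_sum, ← Finset.sum_add_distrib]
  apply Finset.sum_congr rfl
  intro j _
  by_cases h : l ≤ j
  · simp only [if_pos h, LinearMap.comp_apply, LinearMap.mulLeft_apply,
      Derivation.coeFn_coe, pderiv_mul]
    ring
  · simp [if_neg h]

lemma S1 {n : ℕ} {I K : Finset (Fin n)} (hd : Disjoint I K) {l : Fin n} (hl : l ∈ I) :
    sgn n I K * eps (I ∪ K) l = sgn n (I.erase l) K * eps I l := by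
  rw [sgn_eq, sgn_eq, eps_eq, eps_eq, ← pow_add, ← pow_add]
  apply neg_one_pow_congr'
  have h1 := cnt_union hd l
  have h2 := scnt_erase_left hl K
  omega

lemma S2 {n : ℕ} {I K : Finset (Fin n)} (hd : Disjoint I K) {l : Fin n} (hl : l ∈ K) :
    sgn n I K * eps (I ∪ K) l = (-1 : ℤ) ^ I.card * sgn n I (K.erase l) * eps K l := by
  rw [sgn_eq, sgn_eq, eps_eq, eps_eq, ← pow_add, ← pow_add, ← pow_add]
  apply neg_one_pow_congr'
  have h1 := cnt_union hd l
  have h2 := scnt_erase_right hl I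
  have h3 : cnt I l + dcnt I l = I.card :=
    cnt_add_dcnt (Finset.disjoint_right.mp hd hl)
  omega

lemma S3 {n : ℕ} {I K : Finset (Fin n)} {m : Fin n} (hmI : m ∈ I) (hmK : m ∈ K)
    (hd : Disjoint (I.erase m) (K.erase m)) :
    sgn n (I.erase m) K * eps I m + (-1 : ℤ) ^ I.card * sgn n I (K.erase m) * eps K m = 0 := by
  rw [sgn_eq, sgn_eq, eps_eq, eps_eq, ← pow_add, ← pow_add, ← pow_add]
  apply neg_one_pow_anticongr
  have h1 := scnt_erase_right hmK (I.erase m)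
  have h2 := scnt_erase_left hmI (K.erase m)
  have h3 : cnt (I.erase m) m + dcnt (I.erase m) m = (I.erase m).card :=
    cnt_add_dcnt (Finset.notMem_erase m I)
  have h4 := cnt_erase K m
  have h5 := cnt_erase I m
  have h6 : (I.erase m).card = I.card - 1 := Finset.card_erase_of_mem hmI
  have h7 : 1 ≤ I.card := Finset.card_pos.mpr ⟨m, hmI⟩
  omega

lemma erase_union_right {n : ℕ} {I K : Finset (Fin n)} (hd : Disjoint I K) {l : Fin n}
    (hl : l ∈ I) : I.erase l ∪ K = (I ∪ K).erase l := by
  rw [Finset.erase_union_distrib, Finset.erase_eq_of_notMem (Finset.disjoint_left.mp hd hl)]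

lemma erase_union_left {n : ℕ} {I K : Finset (Fin n)} (hd : Disjoint I K) {l : Fin n}
    (hl : l ∈ K) : I ∪ K.erase l = (I ∪ K).erase l := by
  rw [Finset.erase_union_distrib, Finset.erase_eq_of_notMem (Finset.disjoint_right.mp hd hl)]

lemma key {n : ℕ} (I K : Finset (Fin n)) (p q : MvPolynomial (Fin n) ℤ) :
    Hdel (wmul (bas I p) (bas K q)) =
      wmul (Hdel (bas I p)) (bas K q) + ((-1 : ℤ) ^ I.card) • wmul (bas I p) (Hdel (bas K q))
      + wmul (Hdel (bas I q)) (bas K p)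
      + ((-1 : ℤ) ^ I.card) • wmul (bas I q) (Hdel (bas K p)) := by
  by_cases hd : Disjoint I K
  · rw [wmul_bas_disjoint hd, Hdel_bas (I ∪ K) (sgn n I K • (p * q)), Hdel_bas I p, Hdel_bas I q,
      Hdel_bas K q, Hdel_bas K p, wmul_sum_left, wmul_sum_left, wmul_sum_right, wmul_sum_right,
      Finset.smul_sum, Finset.smul_sum, Finset.sum_union hd]
    have hIpart :
        ∑ l ∈ I, bas ((I ∪ K).erase l) (eps (I ∪ K) l • DD ℤ n l (sgn n I K • (p * q)))
        = (∑ l ∈ I, wmul (bas (I.erase l) (eps I l • DD ℤ n l p)) (bas K q))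
          + ∑ l ∈ I, wmul (bas (I.erase l) (eps I l • DD ℤ n l q)) (bas K p) := by
      rw [← Finset.sum_add_distrib]
      apply Finset.sum_congr rfl
      intro l hl
      have hdl : Disjoint (I.erase l) K := hd.mono_left (Finset.erase_subset l I)
      rw [wmul_bas_disjoint hdl, wmul_bas_disjoint hdl, erase_union_right hd hl, ← bas_add]
      apply congrArg
      rw [map_smul, DD_mul]
      have S1c : ((sgn n I K * eps (I ∪ K) l : ℤ) : MvPolynomial (Fin n) ℤ)
          = ((sgn n (I.erase l) K * eps I l : ℤ) : MvPolynomial (Fin n) ℤ) :=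
        congrArg _ (S1 hd hl)
      push_cast at S1c
      simp only [zsmul_eq_mul]
      push_cast
      linear_combination (DD ℤ n l p * q + p * DD ℤ n l q) * S1c
    have hKpart :
        ∑ l ∈ K, bas ((I ∪ K).erase l) (eps (I ∪ K) l • DD ℤ n l (sgn n I K • (p * q)))
        = (∑ l ∈ K, ((-1 : ℤ) ^ I.card) •
              wmul (bas I p) (bas (K.erase l) (eps K l • DD ℤ n l q)))
          + ∑ l ∈ K, ((-1 : ℤ) ^ I.card) •
              wmul (bas I q) (bas (K.erase l) (eps K l • DD ℤ n l p)) := by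
      rw [← Finset.sum_add_distrib]
      apply Finset.sum_congr rfl
      intro l hl
      have hdl : Disjoint I (K.erase l) := hd.mono_right (Finset.erase_subset l K)
      rw [wmul_bas_disjoint hdl, wmul_bas_disjoint hdl, erase_union_left hd hl,
        ← bas_smul, ← bas_smul, ← bas_add]
      apply congrArg
      rw [map_smul, DD_mul]
      have S2c : ((sgn n I K * eps (I ∪ K) l : ℤ) : MvPolynomial (Fin n) ℤ)
          = (((-1 : ℤ) ^ I.card * sgn n I (K.erase l) * eps K l : ℤ) : MvPolynomial (Fin n) ℤ) :=
        congrArg _ (S2 hd hl)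
      push_cast at S2c
      simp only [zsmul_eq_mul]
      push_cast
      linear_combination (p * DD ℤ n l q + q * DD ℤ n l p) * S2c
    rw [hIpart, hKpart]
    abel
  · rw [wmul_bas_not_disjoint hd, Hdel_zero, Hdel_bas I p, Hdel_bas I q, Hdel_bas K q,
      Hdel_bas K p, wmul_sum_left, wmul_sum_left, wmul_sum_right, wmul_sum_right,
      Finset.smul_sum, Finset.smul_sum]
    obtain ⟨x, hxI, hxK⟩ := Finset.not_disjoint_iff.mp hd
    by_cases hone : ∃ m, m ∈ I ∧ m ∈ K ∧ Disjoint (I.erase m) K ∧ Disjoint I (K.erase m)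
    · obtain ⟨m, hmI, hmK, hdI, hdK⟩ := hone
      have hu1 : I.erase m ∪ K = I ∪ K := by
        ext y
        simp only [Finset.mem_union, Finset.mem_erase]
        constructor
        · rintro (⟨-, h⟩ | h)
          · exact Or.inl h
          · exact Or.inr h
        · rintro (h | h)
          · by_cases hy : y = m
            · exact Or.inr (hy ▸ hmK)
            · exact Or.inl ⟨hy, h⟩
          · exact Or.inr h
      have hu2 : I ∪ K.erase m = I ∪ K := by
        ext y
        simp only [Finset.mem_union, Finset.mem_erase]
        constructor
        · rintro (h | ⟨-, h⟩)
          · exact Or.inl h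
          · exact Or.inr h
        · rintro (h | h)
          · exact Or.inl h
          · by_cases hy : y = m
            · exact Or.inl (hy ▸ hmI)
            · exact Or.inr ⟨hy, h⟩
      have e1 : ∀ r u : MvPolynomial (Fin n) ℤ,
          ∑ l ∈ I, wmul (bas (I.erase l) (eps I l • DD ℤ n l r)) (bas K u)
          = bas (I ∪ K) (sgn n (I.erase m) K • ((eps I m • DD ℤ n m r) * u)) := by
        intro r u
        rw [Finset.sum_eq_single_of_mem m hmI]
        · rw [wmul_bas_disjoint hdI, hu1]
        · intro l hlI hne
          apply wmul_bas_not_disjoint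
          exact Finset.not_disjoint_iff.mpr ⟨m, Finset.mem_erase.mpr ⟨Ne.symm hne, hmI⟩, hmK⟩
      have e2 : ∀ r u : MvPolynomial (Fin n) ℤ,
          ∑ l ∈ K, ((-1 : ℤ) ^ I.card) • wmul (bas I r) (bas (K.erase l) (eps K l • DD ℤ n l u))
          = ((-1 : ℤ) ^ I.card) •
              bas (I ∪ K) (sgn n I (K.erase m) • (r * (eps K m • DD ℤ n m u))) := by
        intro r u
        rw [Finset.sum_eq_single_of_mem m hmK]
        · rw [wmul_bas_disjoint hdK, hu2]
        · intro l hlK hne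
          rw [wmul_bas_not_disjoint, smul_zero]
          exact Finset.not_disjoint_iff.mpr ⟨m, hmI, Finset.mem_erase.mpr ⟨Ne.symm hne, hmK⟩⟩
      rw [e1 p q, e1 q p, e2 p q, e2 q p, ← bas_smul, ← bas_smul, ← bas_add, ← bas_add, ← bas_add]
      rw [eq_comm, ← bas_zero (I ∪ K)]
      apply congrArg
      have S3c : ((sgn n (I.erase m) K * eps I m : ℤ) : MvPolynomial (Fin n) ℤ)
          + (((-1 : ℤ) ^ I.card * sgn n I (K.erase m) * eps K m : ℤ) : MvPolynomial (Fin n) ℤ)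
          = 0 := by
        rw [← Int.cast_add, S3 hmI hmK (hdI.mono_right (Finset.erase_subset m K)), Int.cast_zero]
      push_cast at S3c
      simp only [zsmul_eq_mul]
      push_cast
      linear_combination (DD ℤ n m p * q + p * DD ℤ n m q) * S3c
    · have hz : ∀ l ∈ I, ¬ Disjoint (I.erase l) K := by
        intro l hl hdis
        have hxl : x = l := by
          by_contra hne
          exact Finset.disjoint_left.mp hdis (Finset.mem_erase.mpr ⟨hne, hxI⟩) hxK
        subst hxl
        apply hone
        refine ⟨x, hxI, hxK, hdis, ?_⟩
        rw [Finset.disjoint_right]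
        intro y hy hyI
        have hyK := Finset.mem_of_mem_erase hy
        have : y = x := by
          by_contra hne
          exact Finset.disjoint_left.mp hdis (Finset.mem_erase.mpr ⟨hne, hyI⟩) hyK
        exact (Finset.notMem_erase x K) (this ▸ hy)
      have hz' : ∀ l ∈ K, ¬ Disjoint I (K.erase l) := by
        intro l hl hdis
        have hxl : x = l := by
          by_contra hne
          exact Finset.disjoint_right.mp hdis (Finset.mem_erase.mpr ⟨hne, hxK⟩) hxI
        subst hxl
        apply hone
        have hdI : Disjoint (I.erase x) K := by
          rw [Finset.disjoint_left]
          intro y hy hyK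
          have hyI := Finset.mem_of_mem_erase hy
          have : y = x := by
            by_contra hne
            exact Finset.disjoint_right.mp hdis (Finset.mem_erase.mpr ⟨hne, hyK⟩) hyI
          exact (Finset.notMem_erase x I) (this ▸ hy)
        exact ⟨x, hxI, hxK, hdI, hdis⟩
      rw [Finset.sum_eq_zero, Finset.sum_eq_zero, Finset.sum_eq_zero, Finset.sum_eq_zero]
      · simp
      · intro l hl; rw [wmul_bas_not_disjoint (hz' l hl), smul_zero]
      · intro l hl; rw [wmul_bas_not_disjoint (hz l hl)]
      · intro l hl; rw [wmul_bas_not_disjoint (hz' l hl), smul_zero]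
      · intro l hl; rw [wmul_bas_not_disjoint (hz l hl)]

lemma bas_apply_self {n : ℕ} (I : Finset (Fin n)) (p : MvPolynomial (Fin n) ℤ) :
    (bas I p) I = p := by simp [bas]

lemma bk_bas {n : ℕ} (I : Finset (Fin n)) (p : MvPolynomial (Fin n) ℤ) (b : H' n) :
    bk (bas I p) b = ((-1 : ℤ) ^ I.card) •
        (Hdel (wmul (bas I p) b) - wmul (Hdel (bas I p)) b) - wmul (bas I p) (Hdel b) := by
  rw [bk, Finset.sum_eq_single_of_mem I (Finset.mem_univ I)]
  · rw [bas_apply_self]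
  · intro I' _ hne
    have hz : (bas I p) I' = 0 := by simp [bas, hne]
    simp [hz, bas_zero, Hdel_zero, wmul_zero_left]

theorem stmt6 (n : ℕ) (hn : 1 ≤ n) (I K : Finset (Fin n)) (J L : Fin n →₀ ℕ) :
    ((-1 : ℤ) ^ I.card) •
        bk (bas I (MvPolynomial.monomial J 1)) (bas K (MvPolynomial.monomial L 1))
      = wmul (Hdel (bas I (MvPolynomial.monomial L 1))) (bas K (MvPolynomial.monomial J 1))
        + ((-1 : ℤ) ^ I.card) •
            wmul (bas I (MvPolynomial.monomial L 1))
              (Hdel (bas K (MvPolynomial.monomial J 1))) := by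
  rw [bk_bas, smul_sub, smul_smul, ← pow_add, Even.neg_one_pow ⟨I.card, rfl⟩, one_smul,
    key I K (MvPolynomial.monomial J 1) (MvPolynomial.monomial L 1)]
  abel
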